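/- Let μ₁,…,μ_m be nonzero integers with ∑ᵢ μᵢ = 0, and let c₁,…,c_m be commuting nilpotent elements of a commutative ℚ-algebra R. Then for every r ∈ ℤ, the product ∏ᵢ (ξ + cᵢ/μᵢ)^{μᵢ r}, expanded as a Laurent series in ξ^{-1}, has the form ∑_{m≥0} P_m(r) ξ^{-m} where each coefficient P_m(r) ∈ R is polynomial in r of degree at most m; in particular the ξ⁰-coefficient is 1 and the ξ^{-1}-coefficient is r·∑ᵢ cᵢ. -/

import Mathlib

open Finset Polynomial


/-- Generalized binomial coefficient polynomial: `qb j` evaluated at `q` is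
`q(q-1)⋯(q-j+1)/j!`. -/
noncomputable def qb (j : ℕ) : Polynomial ℚ :=
  (j.factorial : ℚ)⁻¹ • ∏ t ∈ Finset.range j, (X - C (t : ℚ))

lemma qb_natDegree_le (j : ℕ) : (qb j).natDegree ≤ j := by
  have h1 : (qb j).natDegree ≤ (∏ t ∈ Finset.range j, (X - C (t : ℚ))).natDegree :=
    natDegree_smul_le _ _
  refine h1.trans ((natDegree_prod_le _ _).trans ?_)
  simp only [natDegree_X_sub_C]
  simp

lemma qb_zero : qb 0 = 1 := by simp [qb]

lemma qb_one : qb 1 = X := by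
  simp [qb, Finset.prod_range_one]

lemma qb_eval (q : ℚ) (j : ℕ) :
    (qb j).eval q = (j.factorial : ℚ)⁻¹ * ∏ t ∈ range j, (q - t) := by
  simp [qb, eval_prod]

lemma qb_eval_zero_succ (j : ℕ) : (qb (j + 1)).eval 0 = 0 := by
  rw [qb_eval]
  rw [Finset.prod_eq_zero (Finset.mem_range.mpr (Nat.succ_pos j)) (by simp)]
  simp

lemma qb_pascal (q : ℚ) (j : ℕ) :
    (qb (j + 1)).eval (q + 1) = (qb (j + 1)).eval q + (qb j).eval q := by
  rw [qb_eval, qb_eval, qb_eval]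
  rw [Finset.prod_range_succ' (fun t => q + 1 - (t : ℚ)) j]
  rw [Finset.prod_range_succ (fun t => q - (t : ℚ)) j]
  have h1 : ∀ t ∈ range j, (q + 1 - ((t : ℕ) + 1 : ℕ)) = q - (t : ℚ) := by
    intro t _; push_cast; ring
  rw [Finset.prod_congr rfl h1]
  have h2 : ((j + 1).factorial : ℚ) = (j + 1) * j.factorial := by
    push_cast [Nat.factorial_succ]; ring
  have h3 : (j.factorial : ℚ) ≠ 0 := Nat.cast_ne_zero.mpr (Nat.factorial_ne_zero j)
  have h4 : ((j : ℚ) + 1) ≠ 0 := by positivity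
  rw [h2]
  field_simp
  ring

lemma qb_step {S : Type*} [CommRing S] [Algebra ℚ S]
    (x : S) (M : ℕ) (hx : x ^ (M + 1) = 0) (q : ℚ) :
    (1 + x) * (∑ j ∈ range (M + 1), (qb j).eval q • x ^ j)
      = ∑ j ∈ range (M + 1), (qb j).eval (q + 1) • x ^ j := by
  have hxs : x * ∑ j ∈ range (M + 1), (qb j).eval q • x ^ j
      = ∑ j ∈ range M, (qb j).eval q • x ^ (j + 1) := by
    rw [Finset.mul_sum, Finset.sum_range_succ]
    simp only [mul_smul_comm, ← pow_succ']
    rw [hx, smul_zero, add_zero]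
  rw [add_mul, one_mul, hxs]
  rw [Finset.sum_range_succ' (fun j => (qb j).eval (q + 1) • x ^ j) M]
  rw [Finset.sum_range_succ' (fun j => (qb j).eval q • x ^ j) M]
  have h1 : ∀ j ∈ range M, (qb (j + 1)).eval (q + 1) • x ^ (j + 1)
      = (qb (j + 1)).eval q • x ^ (j + 1) + (qb j).eval q • x ^ (j + 1) := by
    intro j _; rw [qb_pascal, add_smul]
  rw [Finset.sum_congr rfl h1, Finset.sum_add_distrib]
  have h0 : ∀ r : ℚ, (qb 0).eval r = 1 := by intro r; rw [qb_zero]; simp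
  rw [h0, h0]
  abel

lemma unit_zpow_expansion {S : Type*} [CommRing S] [Algebra ℚ S]
    (x : S) (M : ℕ) (hx : x ^ (M + 1) = 0) (u : Sˣ) (hu : (u : S) = 1 + x) (k : ℤ) :
    ((u ^ k : Sˣ) : S) = ∑ j ∈ Finset.range (M + 1), (qb j).eval (k : ℚ) • x ^ j := by
  induction k using Int.induction_on with
  | zero =>
    rw [zpow_zero]
    rw [Finset.sum_range_succ' (fun j => (qb j).eval ((0 : ℤ) : ℚ) • x ^ j) M]
    simp only [Int.cast_zero, qb_eval_zero_succ, zero_smul, Finset.sum_const_zero, zero_add,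
      pow_zero]
    rw [qb_zero]
    simp
  | succ k ih =>
    have : ((u ^ ((k : ℤ) + 1) : Sˣ) : S) = ((u ^ (k : ℤ) : Sˣ) : S) * (1 + x) := by
      rw [zpow_add_one, Units.val_mul, hu]
    rw [this, ih, mul_comm, qb_step x M hx]
    refine Finset.sum_congr rfl fun j _ => ?_
    push_cast
    ring_nf
  | pred k ih =>
    have hstep := qb_step x M hx ((-(k : ℤ) - 1 : ℤ) : ℚ)
    have hcast : ((-(k : ℤ) - 1 : ℤ) : ℚ) + 1 = ((-(k : ℤ) : ℤ) : ℚ) := by push_cast; ring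
    rw [hcast] at hstep
    have h2 : ((u ^ (-(k : ℤ) - 1 : ℤ) : Sˣ) : S) * (1 + x) = ((u ^ (-(k : ℤ)) : Sˣ) : S) := by
      rw [← hu, ← Units.val_mul, ← zpow_add_one]
      congr 2
      ring
    rw [ih, ← hstep] at h2
    have hux : IsUnit (1 + x) := by rw [← hu]; exact u.isUnit
    refine hux.mul_left_cancel ?_
    rw [mul_comm]
    exact h2


lemma hahn_prod_single {R ι : Type*} [CommRing R] (s : Finset ι) (e : ι → ℤ) (a : ι → R) :
    ∏ i ∈ s, HahnSeries.single (e i) (a i)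
      = HahnSeries.single (∑ i ∈ s, e i) (∏ i ∈ s, a i) := by
  induction s using Finset.cons_induction with
  | empty => simp [HahnSeries.single_zero_one]
  | cons j s hj ih =>
    rw [Finset.prod_cons, Finset.sum_cons, Finset.prod_cons, ih,
      HahnSeries.single_mul_single]

lemma hahn_coeff_sum {R ι : Type*} [CommRing R] (s : Finset ι) (f : ι → HahnSeries ℤ R)
    (n : ℤ) : (∑ i ∈ s, f i).coeff n = ∑ i ∈ s, (f i).coeff n := by
  induction s using Finset.cons_induction with
  | empty => simp
  | cons j s hj ih => rw [Finset.sum_cons, Finset.sum_cons, HahnSeries.coeff_add, ih]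

lemma prod_qsmul {S ι : Type*} [CommRing S] [Algebra ℚ S] (s : Finset ι) (a : ι → ℚ)
    (f : ι → S) : ∏ i ∈ s, a i • f i = (∏ i ∈ s, a i) • ∏ i ∈ s, f i := by
  simp only [Algebra.smul_def, Finset.prod_mul_distrib, map_prod]

lemma prod_zpow_sum {G ι : Type*} [CommGroup G] (x : G) (s : Finset ι) (k : ι → ℤ) :
    ∏ i ∈ s, x ^ k i = x ^ (∑ i ∈ s, k i) := by
  induction s using Finset.cons_induction with
  | empty => simp
  | cons j s hj ih => rw [Finset.prod_cons, Finset.sum_cons, ih, zpow_add]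

lemma unit_zpow_expansion' {S : Type*} [CommRing S] [Algebra ℚ S]
    (x : S) (M : ℕ) (hx : x ^ (M + 1) = 0) (u : Sˣ) (hu : (u : S) = 1 + x) (k : ℤ) :
    ((u ^ k : Sˣ) : S)
      = ∑ j ∈ Finset.range (M + 1), algebraMap ℚ S ((qb j).eval (k : ℚ)) * x ^ j := by
  rw [unit_zpow_expansion x M hx u hu k]
  exact Finset.sum_congr rfl fun j _ => Algebra.smul_def _ _

lemma hahn_algebraMap_eq {R : Type*} [CommRing R] [Algebra ℚ R] (q : ℚ) :
    algebraMap ℚ (HahnSeries ℤ R) q = HahnSeries.single (0 : ℤ) (algebraMap ℚ R q) := by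
  rw [HahnSeries.algebraMap_apply', PowerSeries.algebraMap_apply, HahnSeries.ofPowerSeries_C]
  rfl

/-- Crepant key computation: with nonzero integer weights μᵢ summing to 0 and nilpotent
cᵢ in a commutative ℚ-algebra R, the product ∏ᵢ (ξ + cᵢ/μᵢ)^{μᵢ r}, expanded in
R((ξ^{-1})) (Hahn series in u = ξ^{-1}, so ξ = single (-1) 1 and ξ^{-n} has exponent n),
equals ∑_{n≥0} Pₙ(r) ξ^{-n} with Pₙ polynomial in r of degree ≤ n, P₀ = 1 and
P₁(r) = r·∑ᵢ cᵢ.  The factors (ξ + cᵢ/μᵢ) are the units Aᵢ and integer powers are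
taken in the unit group. -/
theorem crepant_polynomiality (R : Type*) [CommRing R] [Algebra ℚ R] (m : ℕ)
    (μ : Fin m → ℤ) (hμ : ∀ i, μ i ≠ 0) (hsum : ∑ i, μ i = 0)
    (c : Fin m → R) (hc : ∀ i, IsNilpotent (c i))
    (A : Fin m → (HahnSeries ℤ R)ˣ)
    (hA : ∀ i, (A i : HahnSeries ℤ R) =
      HahnSeries.single (-1 : ℤ) 1 + HahnSeries.single (0 : ℤ) ((μ i : ℚ)⁻¹ • c i)) :
    ∃ P : ℕ → Polynomial R,
      (∀ n, (P n).natDegree ≤ n) ∧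
      P 0 = 1 ∧
      P 1 = Polynomial.C (∑ i, c i) * Polynomial.X ∧
      ∀ r : ℤ,
        (∀ n : ℤ, n < 0 →
          ((∏ i, A i ^ (μ i * r) : (HahnSeries ℤ R)ˣ) : HahnSeries ℤ R).coeff n = 0) ∧
        (∀ n : ℕ,
          ((∏ i, A i ^ (μ i * r) : (HahnSeries ℤ R)ˣ) : HahnSeries ℤ R).coeff (n : ℤ)
            = (P n).eval (r : R)) := by
  classical
  obtain ⟨M, hM1, hcM⟩ : ∃ M : ℕ, 1 ≤ M ∧ ∀ i, c i ^ (M + 1) = 0 := by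
    refine ⟨(∑ i, (hc i).choose) + 1, le_add_self, fun i => ?_⟩
    refine pow_eq_zero_of_le ?_ (hc i).choose_spec
    calc (hc i).choose ≤ ∑ i, (hc i).choose :=
          Finset.single_le_sum (f := fun i => (hc i).choose) (fun i _ => Nat.zero_le _)
            (Finset.mem_univ i)
      _ ≤ (∑ i, (hc i).choose) + 1 + 1 := by omega
  set d : Fin m → R := fun i => (μ i : ℚ)⁻¹ • c i with hd
  have hdpow : ∀ i, d i ^ (M + 1) = 0 := by
    intro i
    show ((μ i : ℚ)⁻¹ • c i) ^ (M + 1) = 0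
    rw [_root_.smul_pow, hcM i, smul_zero]
  set v : Fin m → HahnSeries ℤ R := fun i => HahnSeries.single (1 : ℤ) (d i) with hv
  have hvpow : ∀ i, v i ^ (M + 1) = 0 := by
    intro i
    show (HahnSeries.single (1 : ℤ) (d i)) ^ (M + 1) = 0
    rw [HahnSeries.single_pow, hdpow i]
    exact HahnSeries.single_eq_zero
  have hUex : ∀ i, ∃ u : (HahnSeries ℤ R)ˣ, (u : HahnSeries ℤ R) = 1 + v i :=
    fun i => ⟨(IsNilpotent.isUnit_one_add ⟨M + 1, hvpow i⟩).unit, IsUnit.unit_spec _⟩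
  choose U hU using hUex
  obtain ⟨ξu, hxi⟩ : ∃ u : (HahnSeries ℤ R)ˣ,
      (u : HahnSeries ℤ R) = HahnSeries.single (-1 : ℤ) 1 := by
    refine ⟨⟨HahnSeries.single (-1 : ℤ) 1, HahnSeries.single (1 : ℤ) 1, ?_, ?_⟩, rfl⟩ <;>
      · rw [HahnSeries.single_mul_single]
        norm_num [HahnSeries.single_zero_one]
  have hAeq : ∀ i, A i = ξu * U i := by
    intro i
    refine Units.ext ?_
    rw [Units.val_mul, hxi, hU i, mul_add, mul_one, hA i, HahnSeries.single_mul_single]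
    show _ + HahnSeries.single (0:ℤ) (d i) = _ + HahnSeries.single ((-1 : ℤ) + 1) (1 * d i)
    norm_num
  have hprod : ∀ r : ℤ, (∏ i, A i ^ (μ i * r) : (HahnSeries ℤ R)ˣ)
      = ∏ i, U i ^ (μ i * r) := by
    intro r
    calc (∏ i, A i ^ (μ i * r) : (HahnSeries ℤ R)ˣ)
        = ∏ i, (ξu ^ (μ i * r) * U i ^ (μ i * r)) := by
          refine Finset.prod_congr rfl fun i _ => ?_
          rw [hAeq i]
          exact mul_zpow ξu (U i) (μ i * r)
      _ = (∏ i, ξu ^ (μ i * r)) * ∏ i, U i ^ (μ i * r) := Finset.prod_mul_distrib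
      _ = ∏ i, U i ^ (μ i * r) := by
          have h5 : (∏ i, ξu ^ (μ i * r)) = ξu ^ (∑ i, μ i * r) := by
            exact prod_zpow_sum _ _ _
          have h6 : ξu ^ (∑ i, μ i * r) = 1 := by
            rw [← Finset.sum_mul, hsum, zero_mul]
            exact zpow_zero ξu
          rw [h5, h6, one_mul]
  have hexp : ∀ r : ℤ, ((∏ i, A i ^ (μ i * r) : (HahnSeries ℤ R)ˣ) : HahnSeries ℤ R)
      = ∑ p ∈ Fintype.piFinset (fun _ : Fin m => Finset.range (M + 1)),
          HahnSeries.single (∑ i, (p i : ℤ))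
            (algebraMap ℚ R (∏ i, (qb (p i)).eval ((μ i * r : ℤ) : ℚ)) * ∏ i, d i ^ p i) := by
    intro r
    rw [hprod r]
    have h1 : ((∏ i, U i ^ (μ i * r) : (HahnSeries ℤ R)ˣ) : HahnSeries ℤ R)
        = ∏ i, ((U i ^ (μ i * r) : (HahnSeries ℤ R)ˣ) : HahnSeries ℤ R) :=
      map_prod (Units.coeHom (HahnSeries ℤ R)) _ Finset.univ
    rw [h1]
    have h2 : ∀ i, ((U i ^ (μ i * r) : (HahnSeries ℤ R)ˣ) : HahnSeries ℤ R)
        = ∑ j ∈ Finset.range (M + 1),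
            algebraMap ℚ (HahnSeries ℤ R) ((qb j).eval ((μ i * r : ℤ) : ℚ)) * v i ^ j :=
      fun i => unit_zpow_expansion' (v i) M (hvpow i) (U i) (hU i) _
    rw [Finset.prod_congr rfl fun i _ => h2 i, Finset.prod_univ_sum]
    refine Finset.sum_congr rfl fun p _ => ?_
    rw [Finset.prod_mul_distrib, ← map_prod]
    have h3 : ∀ i, v i ^ p i = HahnSeries.single ((p i : ℤ)) (d i ^ p i) := by
      intro i
      show (HahnSeries.single (1 : ℤ) (d i)) ^ p i = _
      rw [HahnSeries.single_pow]
      congr 1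
      simp
    rw [Finset.prod_congr rfl fun i _ => h3 i, hahn_prod_single]
    have h4 : (algebraMap ℚ (HahnSeries ℤ R)) (∏ x, (qb (p x)).eval ((μ x * r : ℤ) : ℚ))
        = HahnSeries.single (0 : ℤ)
            (algebraMap ℚ R (∏ x, (qb (p x)).eval ((μ x * r : ℤ) : ℚ))) :=
      hahn_algebraMap_eq _
    rw [h4]
    have h5 := HahnSeries.single_mul_single (R := R) (a := (0 : ℤ)) (b := ∑ i, (p i : ℤ))
      (r := algebraMap ℚ R (∏ x, (qb (p x)).eval ((μ x * r : ℤ) : ℚ))) (s := ∏ i, d i ^ p i)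
    rw [h5, zero_add]
  have hcoeff : ∀ (r : ℤ) (n : ℤ),
      ((∏ i, A i ^ (μ i * r) : (HahnSeries ℤ R)ˣ) : HahnSeries ℤ R).coeff n
      = ∑ p ∈ Fintype.piFinset (fun _ : Fin m => Finset.range (M + 1)),
          (if n = ∑ i, (p i : ℤ)
            then algebraMap ℚ R (∏ i, (qb (p i)).eval ((μ i * r : ℤ) : ℚ)) * ∏ i, d i ^ p i
            else 0) := by
    intro r n
    rw [hexp r, hahn_coeff_sum]
    refine Finset.sum_congr rfl fun p _ => ?_
    split_ifs with h
    · rw [h]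
      exact HahnSeries.coeff_single_same _ _
    · exact HahnSeries.coeff_single_of_ne h
  have hcoeffN : ∀ (r : ℤ) (n : ℕ),
      ((∏ i, A i ^ (μ i * r) : (HahnSeries ℤ R)ˣ) : HahnSeries ℤ R).coeff (n : ℤ)
      = ∑ p ∈ (Fintype.piFinset (fun _ : Fin m => Finset.range (M + 1))).filter
            (fun p => ∑ i, p i = n),
          algebraMap ℚ R (∏ i, (qb (p i)).eval ((μ i * r : ℤ) : ℚ)) * ∏ i, d i ^ p i := by
    intro r n
    rw [hcoeff r (n : ℤ), Finset.sum_filter]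
    refine Finset.sum_congr rfl fun p _ => ?_
    have hiff : ((n : ℤ) = ∑ i, (p i : ℤ)) ↔ (∑ i, p i = n) := by
      rw [← Nat.cast_sum]
      exact_mod_cast eq_comm
    exact if_congr hiff rfl rfl
  set Pf : ℕ → Polynomial R := fun n =>
    ∑ p ∈ (Fintype.piFinset (fun _ : Fin m => Finset.range (M + 1))).filter
        (fun p => ∑ i, p i = n),
      Polynomial.map (algebraMap ℚ R)
          (∏ i, (qb (p i)).comp (Polynomial.C (μ i : ℚ) * Polynomial.X))
        * Polynomial.C (∏ i, d i ^ p i) with hPfdef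
  have hPfn : ∀ n, Pf n
      = ∑ p ∈ (Fintype.piFinset (fun _ : Fin m => Finset.range (M + 1))).filter
          (fun p => ∑ i, p i = n),
        Polynomial.map (algebraMap ℚ R)
            (∏ i, (qb (p i)).comp (Polynomial.C (μ i : ℚ) * Polynomial.X))
          * Polynomial.C (∏ i, d i ^ p i) := fun n => rfl
  have hPfeval : ∀ (r : ℤ) (n : ℕ), (Pf n).eval ((r : ℤ) : R)
      = ∑ p ∈ (Fintype.piFinset (fun _ : Fin m => Finset.range (M + 1))).filter
            (fun p => ∑ i, p i = n),
          algebraMap ℚ R (∏ i, (qb (p i)).eval ((μ i * r : ℤ) : ℚ)) * ∏ i, d i ^ p i := by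
    intro r n
    rw [hPfn n, Polynomial.eval_finset_sum]
    refine Finset.sum_congr rfl fun p _ => ?_
    rw [Polynomial.eval_mul, Polynomial.eval_C]
    congr 1
    have h1 : ((r : ℤ) : R) = algebraMap ℚ R ((r : ℤ) : ℚ) := by rw [map_intCast]
    rw [h1, Polynomial.eval_map, Polynomial.eval₂_at_apply]
    congr 1
    rw [Polynomial.eval_prod]
    refine Finset.prod_congr rfl fun i _ => ?_
    rw [Polynomial.eval_comp]
    congr 1
    rw [Polynomial.eval_mul, Polynomial.eval_C, Polynomial.eval_X]
    push_cast
    ring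
  have hPfdeg : ∀ n, (Pf n).natDegree ≤ n := by
    intro n
    rw [hPfn n]
    refine Polynomial.natDegree_sum_le_of_forall_le _ _ fun p hp => ?_
    have hpn : ∑ i, p i = n := (Finset.mem_filter.mp hp).2
    refine (Polynomial.natDegree_mul_le).trans ?_
    rw [Polynomial.natDegree_C, add_zero]
    refine (Polynomial.natDegree_map_le).trans ?_
    refine (Polynomial.natDegree_prod_le _ _).trans ?_
    rw [← hpn]
    refine Finset.sum_le_sum fun i _ => ?_
    refine (Polynomial.natDegree_comp_le).trans ?_
    have h2 : (Polynomial.C (μ i : ℚ) * Polynomial.X).natDegree ≤ 1 := by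
      refine (Polynomial.natDegree_mul_le).trans ?_
      simp
    calc (qb (p i)).natDegree * (Polynomial.C (μ i : ℚ) * Polynomial.X).natDegree
        ≤ p i * 1 := Nat.mul_le_mul (qb_natDegree_le _) h2
      _ = p i := mul_one _
  have hfilt0 : (Fintype.piFinset (fun _ : Fin m => Finset.range (M + 1))).filter
      (fun p => ∑ i, p i = 0) = {fun _ => 0} := by
    ext p
    simp only [Finset.mem_filter, Fintype.mem_piFinset, Finset.mem_range, Finset.mem_singleton]
    constructor
    · rintro ⟨-, hs⟩
      funext i
      exact Finset.sum_eq_zero_iff.mp hs i (Finset.mem_univ i)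
    · rintro rfl
      exact ⟨fun i => by show (0:ℕ) < M + 1; omega, by simp⟩
  have hPf0 : Pf 0 = 1 := by
    rw [hPfn 0, hfilt0, Finset.sum_singleton]
    simp [qb_zero]
  have hfilt1 : (Fintype.piFinset (fun _ : Fin m => Finset.range (M + 1))).filter
      (fun p => ∑ i, p i = 1)
      = Finset.image (fun i : Fin m => Pi.single i 1) Finset.univ := by
    ext p
    simp only [Finset.mem_filter, Fintype.mem_piFinset, Finset.mem_range, Finset.mem_image,
      Finset.mem_univ, true_and]
    constructor
    · rintro ⟨-, hs⟩
      have hex : ∃ i, p i ≠ 0 := by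
        by_contra h
        push_neg at h
        rw [Finset.sum_eq_zero fun i _ => h i] at hs
        omega
      obtain ⟨i, hi⟩ := hex
      have hsplit : p i + ∑ j ∈ Finset.univ.erase i, p j = 1 := by
        rw [Finset.add_sum_erase _ p (Finset.mem_univ i)]
        exact hs
      have hone : p i = 1 := by omega
      have ht : ∑ j ∈ Finset.univ.erase i, p j = 0 := by omega
      have hzero : ∀ j, j ≠ i → p j = 0 := fun j hj =>
        Finset.sum_eq_zero_iff.mp ht j (Finset.mem_erase.mpr ⟨hj, Finset.mem_univ j⟩)
      refine ⟨i, ?_⟩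
      funext j
      by_cases hj : j = i
      · subst hj
        rw [Pi.single_eq_same, hone]
      · rw [Pi.single_eq_of_ne hj]
        exact (hzero j hj).symm
    · rintro ⟨i, rfl⟩
      constructor
      · intro j
        by_cases hj : j = i
        · subst hj
          rw [Pi.single_eq_same]
          omega
        · rw [Pi.single_eq_of_ne hj]
          omega
      · rw [Finset.sum_pi_single']
        simp
  have hinj : ∀ x ∈ (Finset.univ : Finset (Fin m)), ∀ y ∈ Finset.univ,
      (fun i : Fin m => (Pi.single i 1 : Fin m → ℕ)) x = (fun i : Fin m => (Pi.single i 1 : Fin m → ℕ)) y → x = y := by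
    intro x _ y _ h
    by_contra hxy
    have hx := congrFun h x
    simp only [Pi.single_eq_same, Pi.single_eq_of_ne hxy] at hx
    exact one_ne_zero hx
  have hPf1 : Pf 1 = Polynomial.C (∑ i, c i) * Polynomial.X := by
    rw [hPfn 1, hfilt1, Finset.sum_image hinj]
    have hterm : ∀ i : Fin m,
        Polynomial.map (algebraMap ℚ R)
            (∏ j, (qb ((Pi.single i 1 : Fin m → ℕ) j)).comp (Polynomial.C (μ j : ℚ) * Polynomial.X))
          * Polynomial.C (∏ j, d j ^ (Pi.single i 1 : Fin m → ℕ) j)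
        = Polynomial.C (c i) * Polynomial.X := by
      intro i
      have h1 : ∏ j, (qb ((Pi.single i 1 : Fin m → ℕ) j)).comp (Polynomial.C (μ j : ℚ) * Polynomial.X)
          = Polynomial.C (μ i : ℚ) * Polynomial.X := by
        rw [Finset.prod_eq_single i]
        · rw [Pi.single_eq_same, qb_one, Polynomial.X_comp]
        · intro j _ hj
          rw [Pi.single_eq_of_ne hj, qb_zero, Polynomial.one_comp]
        · exact fun h => absurd (Finset.mem_univ i) h
      have h2 : ∏ j, d j ^ (Pi.single i 1 : Fin m → ℕ) j = d i := by
        rw [Finset.prod_eq_single i]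
        · rw [Pi.single_eq_same, pow_one]
        · intro j _ hj
          rw [Pi.single_eq_of_ne hj, pow_zero]
        · exact fun h => absurd (Finset.mem_univ i) h
      rw [h1, h2, Polynomial.map_mul, Polynomial.map_C, Polynomial.map_X]
      have h3 : algebraMap ℚ R (μ i : ℚ) * d i = c i := by
        show algebraMap ℚ R (μ i : ℚ) * ((μ i : ℚ)⁻¹ • c i) = c i
        rw [← Algebra.smul_def, smul_smul, mul_inv_cancel₀, one_smul]
        exact_mod_cast hμ i
      rw [mul_right_comm, ← Polynomial.C_mul, h3]
    rw [Finset.sum_congr rfl fun i _ => hterm i, ← Finset.sum_mul, ← map_sum]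
  refine ⟨Pf, hPfdeg, hPf0, hPf1, fun r => ⟨?_, ?_⟩⟩
  · intro n hn
    rw [hcoeff r n]
    refine Finset.sum_eq_zero fun p _ => ?_
    have hne : ¬ (n = ∑ i, (p i : ℤ)) := by
      intro h
      have h0 : (0 : ℤ) ≤ ∑ i, (p i : ℤ) := Finset.sum_nonneg fun i _ => Int.natCast_nonneg _
      omega
    rw [if_neg hne]
  · intro n
    rw [hcoeffN r n]
    exact (hPfeval r n).symm
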